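/- arXiv:2001.06213 — 2 statements merged into one kernel-verified Lean document; each statement's English description precedes it below -/
import Mathlib

section
/- Let l ≥ 1 and let a, b, c : ℤ → ℂ be l-periodic sequences. Let p be an integer, let T = tr A_l(p), and assume det A_l(p) = 0 (equivalently Π_{j=1}^{l} b_{p+j−1}·c_{p+j−1} = 0). Then for every integer m ≥ 1, K_{lm}(p) = T^{m−1}·K_l(p) and K_{lm−1}(p+1) = T^{m−1}·K_{l−1}(p+1). -/
/-- The continuant `K_n(p)` of the sequences `a b c : ℤ → ℂ`: the determinant of the
`n × n` tridiagonal matrix with diagonal `a_p, …, a_{p+n-1}`, superdiagonal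
`b_p, …, b_{p+n-2}` and subdiagonal `c_p, …, c_{p+n-2}`; it equals `1` for `n = 0`
and `0` for `n < 0`. -/
noncomputable def contK (a b c : ℤ → ℂ) (p n : ℤ) : ℂ :=
  if n < 0 then 0 else
    Matrix.det (Matrix.of fun i j : Fin n.toNat =>
      if (i : ℕ) = (j : ℕ) then a (p + (i : ℕ))
      else if (i : ℕ) + 1 = (j : ℕ) then b (p + (i : ℕ))
      else if (i : ℕ) = (j : ℕ) + 1 then c (p + (j : ℕ))
      else 0)

/-- The 2×2 matrix `L(α, β)` with first row `(α, β)` and second row `(1, 0)`. -/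
def Lmat (α β : ℂ) : Matrix (Fin 2) (Fin 2) ℂ := !![α, β; 1, 0]

/-- `A_n(p) = L(a_p, −b_p c_p) ⋯ L(a_{p+n−1}, −b_{p+n−1} c_{p+n−1})`. -/
noncomputable def Amat (a b c : ℤ → ℂ) (p : ℤ) (n : ℕ) : Matrix (Fin 2) (Fin 2) ℂ :=
  ((List.range n).map (fun i => Lmat (a (p + (i : ℕ))) (-(b (p + (i : ℕ)) * c (p + (i : ℕ)))))).prod

/-! ### Auxiliary lemmas -/

noncomputable def Mm (a b c : ℤ → ℂ) (p : ℤ) (n : ℕ) : Matrix (Fin n) (Fin n) ℂ :=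
  Matrix.of fun i j : Fin n =>
    if (i : ℕ) = (j : ℕ) then a (p + (i : ℕ))
    else if (i : ℕ) + 1 = (j : ℕ) then b (p + (i : ℕ))
    else if (i : ℕ) = (j : ℕ) + 1 then c (p + (j : ℕ))
    else 0

lemma contK_eq (a b c : ℤ → ℂ) (p : ℤ) (n : ℕ) :
    contK a b c p (n : ℤ) = (Mm a b c p n).det := by
  simp [contK, Mm]

lemma contK_neg (a b c : ℤ → ℂ) (p n : ℤ) (h : n < 0) : contK a b c p n = 0 := by
  simp [contK, h]

lemma contK_zero (a b c : ℤ → ℂ) (p : ℤ) : contK a b c p 0 = 1 := by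
  rw [show (0:ℤ) = ((0:ℕ):ℤ) by norm_num, contK_eq]
  simp [Mm]

lemma contK_one (a b c : ℤ → ℂ) (p : ℤ) : contK a b c p 1 = a p := by
  rw [show (1:ℤ) = ((1:ℕ):ℤ) by norm_num, contK_eq]
  simp [Mm, Matrix.det_fin_one]

lemma Mm_submatrix (a b c : ℤ → ℂ) (p : ℤ) (n : ℕ) :
    (Mm a b c p (n+1)).submatrix Fin.succ Fin.succ = Mm a b c (p+1) n := by
  ext i j
  simp only [Mm, Matrix.submatrix_apply, Matrix.of_apply, Fin.val_succ]
  have e1 : ((i:ℕ)+1 = (j:ℕ)+1) ↔ ((i:ℕ) = (j:ℕ)) := by omega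
  have e2 : ((i:ℕ)+1+1 = (j:ℕ)+1) ↔ ((i:ℕ)+1 = (j:ℕ)) := by omega
  have e3 : ((i:ℕ)+1 = (j:ℕ)+1+1) ↔ ((i:ℕ) = (j:ℕ)+1) := by omega
  rw [if_congr e1 rfl rfl, if_congr e2 rfl rfl, if_congr e3 rfl rfl]
  push_cast
  ring_nf

lemma hsa (n : ℕ) (j : Fin (n+1)) :
    (((1 : Fin (n+2)).succAbove j) : ℕ) = if (j:ℕ) < 1 then (j:ℕ) else (j:ℕ)+1 := by
  rcases Nat.lt_or_ge (j:ℕ) 1 with h | h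
  · rw [Fin.succAbove_of_castSucc_lt, if_pos h]
    · simp
    · simpa [Fin.lt_def] using h
  · rw [Fin.succAbove_of_le_castSucc, if_neg (by omega)]
    · simp
    · simpa [Fin.le_def] using h

lemma Mm_det_rec (a b c : ℤ → ℂ) (p : ℤ) (n : ℕ) :
    (Mm a b c p (n+2)).det =
      a p * (Mm a b c (p+1) (n+1)).det - b p * c p * (Mm a b c (p+2) n).det := by
  have hN : ((Mm a b c p (n+2)).submatrix Fin.succ (Fin.succ (0:Fin (n+1))).succAbove).det
      = c p * (Mm a b c (p+2) n).det := by
    rw [Matrix.det_succ_column_zero, Fin.sum_univ_succ]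
    have h00 : (Mm a b c p (n+2)).submatrix Fin.succ (Fin.succ (0:Fin (n+1))).succAbove 0 0
        = c p := by
      simp only [Matrix.submatrix_apply, Mm, Matrix.of_apply, Fin.succ_zero_eq_one]
      rw [show (((1 : Fin (n+2)).succAbove 0) : ℕ) = 0 by rw [hsa]; simp]
      norm_num
    have htl : ∀ i : Fin n,
        (Mm a b c p (n+2)).submatrix Fin.succ (Fin.succ (0:Fin (n+1))).succAbove (Fin.succ i) 0
          = 0 := by
      intro i
      simp only [Matrix.submatrix_apply, Mm, Matrix.of_apply, Fin.succ_zero_eq_one, Fin.val_succ]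
      rw [show (((1 : Fin (n+2)).succAbove 0) : ℕ) = 0 by rw [hsa]; simp]
      norm_num
    have hsub : ((Mm a b c p (n+2)).submatrix Fin.succ
          (Fin.succ (0:Fin (n+1))).succAbove).submatrix (Fin.succAbove 0) Fin.succ
        = Mm a b c (p+2) n := by
      ext i j
      simp only [Matrix.submatrix_apply, Mm, Matrix.of_apply, Fin.succAbove_zero,
        Fin.succ_zero_eq_one, Fin.val_succ]
      rw [show (((1 : Fin (n+2)).succAbove (Fin.succ j)) : ℕ) = (j:ℕ)+2 by rw [hsa]; simp]
      have e1 : ((i:ℕ)+1+1 = (j:ℕ)+2) ↔ ((i:ℕ) = (j:ℕ)) := by omega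
      have e2 : ((i:ℕ)+1+1+1 = (j:ℕ)+2) ↔ ((i:ℕ)+1 = (j:ℕ)) := by omega
      have e3 : ((i:ℕ)+1+1 = (j:ℕ)+2+1) ↔ ((i:ℕ) = (j:ℕ)+1) := by omega
      rw [if_congr e1 rfl rfl, if_congr e2 rfl rfl, if_congr e3 rfl rfl]
      push_cast
      ring_nf
    rw [h00, Finset.sum_eq_zero (fun i _ => by rw [htl i]; ring), hsub]
    simp
  rw [Matrix.det_succ_row_zero, Fin.sum_univ_succ, Fin.sum_univ_succ]
  have h00 : Mm a b c p (n+2) 0 0 = a p := by simp [Mm]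
  have h01 : Mm a b c p (n+2) 0 (Fin.succ 0) = b p := by simp [Mm]
  have htail : ∀ j : Fin n, Mm a b c p (n+2) 0 (Fin.succ (Fin.succ j)) = 0 := by
    intro j; simp [Mm]
  rw [h00, h01, Finset.sum_eq_zero (fun j _ => by rw [htail j]; ring), hN,
    Fin.succAbove_zero, Mm_submatrix]
  simp
  ring

lemma contK_rec (a b c : ℤ → ℂ) (p : ℤ) (n : ℕ) :
    contK a b c p ((n:ℤ)+1) =
      a p * contK a b c (p+1) (n:ℤ) - b p * c p * contK a b c (p+2) ((n:ℤ)-1) := by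
  cases n with
  | zero =>
      simp only [Nat.cast_zero, zero_add, zero_sub]
      rw [contK_one, contK_zero, contK_neg _ _ _ _ _ (by norm_num)]
      ring
  | succ n =>
      have h1 : ((n+1:ℕ):ℤ)+1 = ((n+2:ℕ):ℤ) := by push_cast; ring
      have h2 : ((n+1:ℕ):ℤ)-1 = ((n:ℕ):ℤ) := by push_cast; ring
      rw [h1, h2, contK_eq, contK_eq, contK_eq, Mm_det_rec]

lemma Amat_succ_left (a b c : ℤ → ℂ) (p : ℤ) (n : ℕ) :
    Amat a b c p (n+1) = Lmat (a p) (-(b p * c p)) * Amat a b c (p+1) n := by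
  unfold Amat
  rw [List.range_succ_eq_map]
  simp only [List.map_cons, List.prod_cons, List.map_map]
  congr 1
  · norm_num
  · congr 1
    ext i
    simp only [Function.comp_def]
    congr 2 <;> push_cast <;> ring

lemma Amat_add (a b c : ℤ → ℂ) (p : ℤ) (k n : ℕ) :
    Amat a b c p (k+n) = Amat a b c p k * Amat a b c (p+k) n := by
  unfold Amat
  rw [List.range_add, List.map_append, List.prod_append]
  congr 1
  rw [List.map_map]
  congr 1
  ext i
  simp only [Function.comp_def]
  congr 2 <;> push_cast <;> ring

lemma Amat_form (a b c : ℤ → ℂ) (n : ℕ) : ∀ p : ℤ,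
    Amat a b c p (n+1) =
      !![contK a b c p ((n:ℤ)+1), -(b (p+(n:ℤ)) * c (p+(n:ℤ))) * contK a b c p (n:ℤ);
         contK a b c (p+1) (n:ℤ), -(b (p+(n:ℤ)) * c (p+(n:ℤ))) * contK a b c (p+1) ((n:ℤ)-1)] := by
  induction n with
  | zero =>
      intro p
      rw [Amat_succ_left]
      have h0 : Amat a b c (p+1) 0 = 1 := by simp [Amat]
      rw [h0, mul_one, Lmat]
      simp only [Nat.cast_zero, zero_add, add_zero, zero_sub]
      rw [contK_one, contK_zero, contK_zero, contK_neg _ _ _ _ _ (by norm_num)]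
      norm_num
  | succ n ih =>
      intro p
      rw [Amat_succ_left, ih (p+1), Lmat, Matrix.mul_fin_two]
      have hK1 := contK_rec a b c p (n+1)
      have hK0 := contK_rec a b c p n
      push_cast at hK1 ⊢
      have e4 : (n:ℤ) + 1 - 1 = (n:ℤ) := by ring
      rw [e4] at hK1
      rw [show p + 1 + (n:ℤ) = p + ((n:ℤ)+1) from by ring,
        show p + (1:ℤ) + 1 = p + 2 from by ring, e4]
      ext i j
      fin_cases i <;> fin_cases j <;>
        simp only [Fin.zero_eta, Fin.mk_one, Fin.isValue, Matrix.cons_val',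
          Matrix.cons_val_zero, Matrix.cons_val_one, Matrix.head_cons, Matrix.empty_val',
          Matrix.cons_val_fin_one, Matrix.head_fin_const, Matrix.of_apply]
      · linear_combination -hK1
      · linear_combination (b (p+((n:ℤ)+1)) * c (p+((n:ℤ)+1))) * hK0
      · ring
      · ring

lemma Amat_per (a b c : ℤ → ℂ) (l : ℕ)
    (ha : ∀ k : ℤ, a (k + l) = a k) (hb : ∀ k : ℤ, b (k + l) = b k)
    (hc : ∀ k : ℤ, c (k + l) = c k) (p : ℤ) (n : ℕ) :
    Amat a b c (p + l) n = Amat a b c p n := by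
  unfold Amat
  congr 1
  apply List.map_congr_left
  intro i _
  rw [show p + (l:ℤ) + (i:ℕ) = (p + (i:ℕ)) + l from by ring, ha, hb, hc]

lemma Amat_pow (a b c : ℤ → ℂ) (l : ℕ)
    (ha : ∀ k : ℤ, a (k + l) = a k) (hb : ∀ k : ℤ, b (k + l) = b k)
    (hc : ∀ k : ℤ, c (k + l) = c k) (p : ℤ) (m : ℕ) :
    Amat a b c p (l*m) = (Amat a b c p l)^m := by
  induction m with
  | zero => simp [Amat]
  | succ m ih =>
      rw [show l*(m+1) = l + l*m from by ring, Amat_add,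
        Amat_per a b c l ha hb hc, ih, pow_succ']

/-- Periodic continuants (zero determinant case): for `l`-periodic sequences, with
`T = tr A_l(p)` and `det A_l(p) = 0` (equivalently `Π_{j=1}^{l} b_{p+j−1} c_{p+j−1} = 0`),
one has `K_{lm}(p) = T^{m−1}·K_l(p)` and `K_{lm−1}(p+1) = T^{m−1}·K_{l−1}(p+1)`
for all `m ≥ 1`. -/
theorem contK_periodic_det_zero (l : ℕ) (hl : 1 ≤ l) (a b c : ℤ → ℂ)
    (ha : ∀ k : ℤ, a (k + l) = a k) (hb : ∀ k : ℤ, b (k + l) = b k)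
    (hc : ∀ k : ℤ, c (k + l) = c k) (p : ℤ) (T : ℂ)
    (hT : T = (Amat a b c p l).trace) (hD0 : (Amat a b c p l).det = 0)
    (m : ℕ) (hm : 1 ≤ m) :
    contK a b c p ((l : ℤ) * m) = T ^ (m - 1) * contK a b c p (l : ℤ) ∧
    contK a b c (p + 1) ((l : ℤ) * m - 1) =
      T ^ (m - 1) * contK a b c (p + 1) ((l : ℤ) - 1) := by
  set A := Amat a b c p l with hA
  have hsq : A * A = T • A := by
    rw [Matrix.det_fin_two] at hD0
    rw [hT, Matrix.trace_fin_two]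
    ext i j
    fin_cases i <;> fin_cases j <;>
      simp only [Matrix.mul_apply, Fin.sum_univ_two, Matrix.smul_apply, smul_eq_mul,
        Fin.isValue, Fin.zero_eta, Fin.mk_one]
    · linear_combination -hD0
    · ring
    · ring
    · linear_combination -hD0
  have hApow : ∀ j : ℕ, 1 ≤ j → A ^ j = T^(j-1) • A := by
    intro j hj
    induction j with
    | zero => omega
    | succ j ih =>
        rcases Nat.lt_or_ge j 1 with h | h
        · interval_cases j
          simp
        · rw [pow_succ, ih h, Matrix.smul_mul, hsq, smul_smul,
            show j + 1 - 1 = (j - 1) + 1 from by omega, pow_succ]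
  have h1 : 1 ≤ l * m := le_trans hl (Nat.le_mul_of_pos_right l hm)
  obtain ⟨k, hk⟩ : ∃ k:ℕ, l*m = k+1 := ⟨l*m-1, by omega⟩
  obtain ⟨l', hl'⟩ : ∃ l':ℕ, l = l'+1 := ⟨l-1, by omega⟩
  have hclm : ((l:ℤ))*m = (k:ℤ)+1 := by exact_mod_cast congrArg (fun t : ℕ => (t:ℤ)) hk
  have hcl : (l:ℤ) = (l':ℤ)+1 := by exact_mod_cast congrArg (fun t : ℕ => (t:ℤ)) hl'
  have hAlm : Amat a b c p (l*m) = T^(m-1) • A := by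
    rw [Amat_pow a b c l ha hb hc p m, ← hA, hApow m hm]
  rw [hk] at hAlm
  rw [Amat_form a b c k p, hA, hl', Amat_form a b c l' p] at hAlm
  have h00 := congrFun (congrFun hAlm 0) 0
  have h10 := congrFun (congrFun hAlm 1) 0
  simp only [Matrix.smul_apply, smul_eq_mul, Matrix.cons_val', Matrix.cons_val_zero,
    Matrix.cons_val_one, Matrix.head_cons, Matrix.empty_val', Matrix.cons_val_fin_one,
    Matrix.of_apply, Fin.isValue] at h00 h10
  constructor
  · rw [hclm, hcl]
    exact h00
  · rw [hclm, hcl]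
    simpa using h10
end

section
/- Let a be a positive integer, q a nonzero complex number, and write [α]_t = (1 − t^α)/(1 − t). Define sequences a_p = [a]_{q^{(−1)^{p−1}}}, b_p = q^{(−1)^{p−1}·a}, c_p = −1 for p ∈ ℤ (which are 2-periodic), and set x = ([a]_q·[a]_{q^{−1}} + q^a + q^{−a})/2. Then for every integer p and every integer m ≥ 1, K_{2m}(p) = U_{m−1}(x)·([a]_q·[a]_{q^{−1}} + q^{(−1)^{p−1}·a}) − U_{m−2}(x) and K_{2m−1}(p+1) = U_{m−1}(x)·[a]_{q^{(−1)^p}}. -/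
/-- The `t`-integer `[α]_t = (1 − t^α)/(1 − t)`. -/
noncomputable def qInt (t : ℂ) (α : ℕ) : ℂ := (1 - t ^ α) / (1 - t)

open Polynomial Polynomial.Chebyshev in

noncomputable def Tmat (a b c : ℤ → ℂ) (p : ℤ) (n : ℕ) : Matrix (Fin n) (Fin n) ℂ :=
  Matrix.of fun i j : Fin n =>
      if (i : ℕ) = (j : ℕ) then a (p + (i : ℕ))
      else if (i : ℕ) + 1 = (j : ℕ) then b (p + (i : ℕ))
      else if (i : ℕ) = (j : ℕ) + 1 then c (p + (j : ℕ))
      else 0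

lemma Tmat_det_zero (a b c : ℤ → ℂ) (p : ℤ) : (Tmat a b c p 0).det = 1 :=
  Matrix.det_fin_zero

lemma Tmat_det_one (a b c : ℤ → ℂ) (p : ℤ) : (Tmat a b c p 1).det = a p := by
  rw [Matrix.det_fin_one]
  simp [Tmat]

lemma Tmat_det_rec (a b c : ℤ → ℂ) (p : ℤ) (n : ℕ) :
    (Tmat a b c p (n + 2)).det
      = a p * (Tmat a b c (p + 1) (n + 1)).det
        - b p * c p * (Tmat a b c (p + 2) n).det := by
  set M := Tmat a b c p (n + 2) with hM
  have hsub1 : M.submatrix Fin.succ Fin.succ = Tmat a b c (p + 1) (n + 1) := by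
    ext i j
    simp only [hM, Tmat, Matrix.submatrix_apply, Matrix.of_apply, Fin.val_succ, add_left_inj]
    split_ifs <;> first | rfl | (congr 1; push_cast; ring)
  have hsub2 : (M.submatrix ((1 : Fin (n + 2)).succAbove) Fin.succ).submatrix
      Fin.succ Fin.succ = Tmat a b c (p + 2) n := by
    ext i j
    simp only [hM, Tmat, Matrix.submatrix_apply, Fin.one_succAbove_succ, Matrix.of_apply,
      Fin.val_succ, add_left_inj]
    split_ifs <;> first | rfl | (congr 1; push_cast; ring) | contradiction | (exfalso; omega)
  have hrow : ∀ j : Fin (n + 1),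
      (M.submatrix ((1 : Fin (n + 2)).succAbove) Fin.succ) 0 j
        = if (j : ℕ) = 0 then b p else 0 := by
    intro j
    simp only [hM, Tmat, Matrix.submatrix_apply, Fin.one_succAbove_zero, Matrix.of_apply,
      Fin.val_succ, Fin.val_zero]
    split_ifs <;> first | rfl | (congr 1; push_cast; omega) | contradiction | (exfalso; omega)
  have hN : (M.submatrix ((1 : Fin (n + 2)).succAbove) Fin.succ).det
      = b p * (Tmat a b c (p + 2) n).det := by
    rw [Matrix.det_succ_row_zero, Fin.sum_univ_succ]
    have hz : (∑ i : Fin n, ((-1 : ℂ) ^ ((i.succ : Fin (n + 1)) : ℕ) *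
        (M.submatrix ((1 : Fin (n + 2)).succAbove) Fin.succ) 0 i.succ *
        ((M.submatrix ((1 : Fin (n + 2)).succAbove) Fin.succ).submatrix
          Fin.succ i.succ.succAbove).det)) = 0 := by
      refine Finset.sum_eq_zero fun i _ => ?_
      rw [hrow i.succ]
      simp [Fin.val_succ]
    rw [hz, hrow 0, Fin.succAbove_zero, hsub2]
    simp
  rw [Matrix.det_succ_column_zero, Fin.sum_univ_succ, Fin.sum_univ_succ]
  have hz2 : (∑ i : Fin n, ((-1 : ℂ) ^ ((i.succ.succ : Fin (n + 2)) : ℕ) *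
      M i.succ.succ 0 *
      (M.submatrix i.succ.succ.succAbove Fin.succ).det)) = 0 := by
    refine Finset.sum_eq_zero fun i _ => ?_
    have h0 : M i.succ.succ 0 = 0 := by
      simp only [hM, Tmat, Matrix.of_apply, Fin.val_succ, Fin.val_zero]
      split_ifs <;> first | rfl | contradiction | (exfalso; omega)
    rw [h0]; ring
  rw [hz2, Fin.succAbove_zero, hsub1, Fin.succ_zero_eq_one, hN]
  have h00 : M 0 0 = a p := by simp [hM, Tmat]
  have h10 : M 1 0 = c p := by
    simp only [hM, Tmat, Matrix.of_apply, Fin.val_one, Fin.val_zero]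
    norm_num
  rw [h00, h10]
  simp [Fin.val_zero, Fin.val_one]
  ring

lemma contK_eq_Tmat (a b c : ℤ → ℂ) (p : ℤ) (n : ℕ) :
    contK a b c p (n : ℤ) = (Tmat a b c p n).det := by
  rw [contK, if_neg (by omega : ¬((n : ℤ) < 0))]
  rfl

open Polynomial Polynomial.Chebyshev in

lemma key (α : ℕ) (q : ℂ) (hq : q ≠ 0) (x : ℂ)
    (hx : x = (qInt q α * qInt q⁻¹ α + q ^ (α : ℤ) + q ^ (-(α : ℤ))) / 2)
    (p : ℤ) (k : ℕ) :
    (Tmat (fun r => qInt (q ^ (((r - 1).negOnePow : ℤ))) α)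
        (fun r => q ^ ((((r - 1).negOnePow : ℤ)) * α)) (fun _ => -1) p (2 * k + 2)).det =
      (Polynomial.Chebyshev.U ℂ (k : ℤ)).eval x
          * (qInt q α * qInt q⁻¹ α + q ^ ((((p - 1).negOnePow : ℤ)) * α))
        - (Polynomial.Chebyshev.U ℂ ((k : ℤ) - 1)).eval x ∧
    (Tmat (fun r => qInt (q ^ (((r - 1).negOnePow : ℤ))) α)
        (fun r => q ^ ((((r - 1).negOnePow : ℤ)) * α)) (fun _ => -1) (p + 1) (2 * k + 1)).det =
      (Polynomial.Chebyshev.U ℂ (k : ℤ)).eval x * qInt (q ^ ((p.negOnePow : ℤ))) α := by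
  have hs1 : ((p.negOnePow : ℤ)) = -(((p - 1).negOnePow : ℤ)) := by
    have h := Int.negOnePow_succ (p - 1)
    rw [show p - 1 + 1 = p by ring] at h
    rw [h]; push_cast; ring
  rw [hs1]
  set s : ℤ := (((p - 1).negOnePow : ℤ)) with hsdef
  have hs : s = 1 ∨ s = -1 := by
    rcases Int.units_eq_one_or ((p - 1).negOnePow) with h | h
    · left; rw [hsdef, h]; rfl
    · right; rw [hsdef, h]; rfl
  have hq1 : (((p + 1 - 1).negOnePow : ℤ)) = -s := by
    rw [show p + 1 - 1 = p by ring]; exact hs1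
  have hp2 : ∀ r : ℤ, (((r + 2 - 1).negOnePow : ℤ)) = (((r - 1).negOnePow : ℤ)) := by
    intro r
    have h1 := Int.negOnePow_succ (r - 1 + 1)
    have h2 := Int.negOnePow_succ (r - 1)
    rw [h2] at h1
    rw [show r - 1 + 1 + 1 = r + 2 - 1 by ring] at h1
    rw [h1]; push_cast; ring
  have hTper : ∀ (r : ℤ) (n : ℕ),
      Tmat (fun r => qInt (q ^ (((r - 1).negOnePow : ℤ))) α)
        (fun r => q ^ ((((r - 1).negOnePow : ℤ)) * α)) (fun _ => -1) (r + 2) n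
      = Tmat (fun r => qInt (q ^ (((r - 1).negOnePow : ℤ))) α)
        (fun r => q ^ ((((r - 1).negOnePow : ℤ)) * α)) (fun _ => -1) r n := by
    intro r n
    ext i j
    simp only [Tmat, Matrix.of_apply]
    rw [show r + 2 + (i : ℕ) = (r + (i : ℕ)) + 2 by ring]
    split_ifs <;> first | rfl | rw [hp2]
  have huv : q ^ (s * (α : ℤ)) * q ^ (-s * (α : ℤ)) = 1 := by
    rw [← zpow_add₀ hq, show s * (α : ℤ) + -s * (α : ℤ) = 0 by ring, zpow_zero]
  have hprod : qInt (q ^ s) α * qInt (q ^ (-s)) α = qInt q α * qInt q⁻¹ α := by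
    rcases hs with h | h <;> rw [h] <;> norm_num [zpow_neg_one, zpow_one] <;> ring
  have h2x : (2 : ℂ) * x = qInt q α * qInt q⁻¹ α + q ^ (s * (α : ℤ)) + q ^ (-s * (α : ℤ)) := by
    have hsum : q ^ (s * (α : ℤ)) + q ^ (-s * (α : ℤ)) = q ^ ((α : ℤ)) + q ^ (-(α : ℤ)) := by
      rcases hs with h | h <;> rw [h] <;> norm_num <;> ring
    rw [hx]; linear_combination -hsum
  have hUeval : ∀ j : ℤ, (U ℂ (j + 2)).eval x
      = 2 * x * (U ℂ (j + 1)).eval x - (U ℂ j).eval x := by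
    intro j
    rw [Polynomial.Chebyshev.U_add_two]
    simp
  induction k with
  | zero =>
      constructor
      · rw [show (2 * 0 + 2 : ℕ) = 0 + 2 from rfl, Tmat_det_rec,
          show (0 + 1 : ℕ) = 1 from rfl, Tmat_det_one, Tmat_det_zero, hq1, ← hsdef]
        rw [show ((0 : ℕ) : ℤ) = (0 : ℤ) from by norm_num, show (0 : ℤ) - 1 = -1 by ring]
        simp only [Polynomial.Chebyshev.U_zero, Polynomial.Chebyshev.U_neg_one,
          Polynomial.eval_one, Polynomial.eval_zero]
        linear_combination hprod
      · rw [show (2 * 0 + 1 : ℕ) = 1 from rfl, Tmat_det_one, hq1]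
        rw [show ((0 : ℕ) : ℤ) = (0 : ℤ) from by norm_num]
        simp only [Polynomial.Chebyshev.U_zero, Polynomial.eval_one, one_mul]
  | succ k ih =>
      obtain ⟨ih1, ih2⟩ := ih
      have h3 := hUeval ((k : ℤ) - 1)
      rw [show (k : ℤ) - 1 + 2 = (k : ℤ) + 1 by ring, show (k : ℤ) - 1 + 1 = (k : ℤ) by ring] at h3
      have hodd : (Tmat (fun r => qInt (q ^ (((r - 1).negOnePow : ℤ))) α)
          (fun r => q ^ ((((r - 1).negOnePow : ℤ)) * α)) (fun _ => -1) (p + 1)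
            ((2 * k + 1) + 2)).det
          = (U ℂ ((k : ℤ) + 1)).eval x * qInt (q ^ (-s)) α := by
        rw [Tmat_det_rec, show p + 1 + 1 = p + 2 by ring,
          hTper p, hTper (p + 1), show (2 * k + 1) + 1 = 2 * k + 2 by ring,
          ih1, ih2, hq1]
        linear_combination (-(qInt (q ^ (-s)) α)) * h3
          + (-(qInt (q ^ (-s)) α * (U ℂ (k : ℤ)).eval x)) * h2x
      constructor
      · rw [show 2 * (k + 1) + 2 = (2 * k + 2) + 2 by ring, Tmat_det_rec,
          show (2 * k + 2) + 1 = (2 * k + 1) + 2 by ring, hodd, hTper p, ih1, ← hsdef]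
        rw [show ((k + 1 : ℕ) : ℤ) = (k : ℤ) + 1 by push_cast; ring,
          show (k : ℤ) + 1 - 1 = (k : ℤ) by ring]
        linear_combination ((U ℂ ((k : ℤ) + 1)).eval x) * hprod
          + (-(q ^ (s * (α : ℤ)))) * h3
          + (-(q ^ (s * (α : ℤ)) * (U ℂ (k : ℤ)).eval x)) * h2x
          + (-((U ℂ (k : ℤ)).eval x)) * huv
      · rw [show 2 * (k + 1) + 1 = (2 * k + 1) + 2 by ring, hodd,
          show ((k + 1 : ℕ) : ℤ) = (k : ℤ) + 1 by push_cast; ring]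

/-- For a positive integer `α` and `q ≠ 0`, the continuants of the 2-periodic sequences
`a_p = [α]_{q^{(−1)^{p−1}}}`, `b_p = q^{(−1)^{p−1}·α}`, `c_p = −1` satisfy, with
`x = ([α]_q [α]_{q⁻¹} + q^α + q^{−α})/2`:
`K_{2m}(p) = U_{m−1}(x)·([α]_q [α]_{q⁻¹} + q^{(−1)^{p−1}·α}) − U_{m−2}(x)` and
`K_{2m−1}(p+1) = U_{m−1}(x)·[α]_{q^{(−1)^p}}`. -/
theorem contK_qDeformed (α : ℕ) (hα : 1 ≤ α) (q : ℂ) (hq : q ≠ 0)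
    (x : ℂ) (hx : x = (qInt q α * qInt q⁻¹ α + q ^ (α : ℤ) + q ^ (-(α : ℤ))) / 2)
    (p : ℤ) (m : ℕ) (hm : 1 ≤ m) :
    contK (fun r => qInt (q ^ (((r - 1).negOnePow : ℤ))) α)
        (fun r => q ^ ((((r - 1).negOnePow : ℤ)) * α)) (fun _ => -1) p (2 * (m : ℤ)) =
      (Polynomial.Chebyshev.U ℂ ((m : ℤ) - 1)).eval x
          * (qInt q α * qInt q⁻¹ α + q ^ ((((p - 1).negOnePow : ℤ)) * α))
        - (Polynomial.Chebyshev.U ℂ ((m : ℤ) - 2)).eval x ∧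
    contK (fun r => qInt (q ^ (((r - 1).negOnePow : ℤ))) α)
        (fun r => q ^ ((((r - 1).negOnePow : ℤ)) * α)) (fun _ => -1) (p + 1) (2 * (m : ℤ) - 1) =
      (Polynomial.Chebyshev.U ℂ ((m : ℤ) - 1)).eval x * qInt (q ^ ((p.negOnePow : ℤ))) α := by
  obtain ⟨k, rfl⟩ : ∃ k, m = k + 1 := ⟨m - 1, by omega⟩
  have hK := key α q hq x hx p k
  constructor
  · have hb : contK (fun r => qInt (q ^ (((r - 1).negOnePow : ℤ))) α)
        (fun r => q ^ ((((r - 1).negOnePow : ℤ)) * α)) (fun _ => -1) p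
          (2 * ((k + 1 : ℕ) : ℤ))
        = (Tmat (fun r => qInt (q ^ (((r - 1).negOnePow : ℤ))) α)
            (fun r => q ^ ((((r - 1).negOnePow : ℤ)) * α)) (fun _ => -1) p (2 * k + 2)).det := by
      rw [show (2 * ((k + 1 : ℕ) : ℤ)) = ((2 * k + 2 : ℕ) : ℤ) by push_cast; ring,
        contK_eq_Tmat]
    rw [hb, hK.1, show ((k + 1 : ℕ) : ℤ) - 2 = (k : ℤ) - 1 by push_cast; ring,
      show ((k + 1 : ℕ) : ℤ) - 1 = (k : ℤ) by push_cast; ring]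
  · have hb : contK (fun r => qInt (q ^ (((r - 1).negOnePow : ℤ))) α)
        (fun r => q ^ ((((r - 1).negOnePow : ℤ)) * α)) (fun _ => -1) (p + 1)
          (2 * ((k + 1 : ℕ) : ℤ) - 1)
        = (Tmat (fun r => qInt (q ^ (((r - 1).negOnePow : ℤ))) α)
            (fun r => q ^ ((((r - 1).negOnePow : ℤ)) * α)) (fun _ => -1) (p + 1) (2 * k + 1)).det := by
      rw [show (2 * ((k + 1 : ℕ) : ℤ) - 1) = ((2 * k + 1 : ℕ) : ℤ) by push_cast; ring,
        contK_eq_Tmat]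
    rw [hb, hK.2, show ((k + 1 : ℕ) : ℤ) - 1 = (k : ℤ) by push_cast; ring]
end
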